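/- arXiv:2408.05433 — 5 statements merged into one kernel-verified Lean document; each statement's English description precedes it below -/
import Mathlib

section
/- Let H be an infinite-dimensional separable complex Hilbert space and T a bounded linear operator on H. Then T is consistent in invertibility (i.e., for every bounded operator S on H, ST is invertible if and only if TS is invertible) if and only if exactly one of the following holds: (1) T is invertible; (2) the range of T is not closed; (3) the kernel of T is nonzero and the range of T is closed and proper. -/
open Set Filter Cardinal

noncomputable section

namespace UWE

universe u

variable {H K : Type u} [NormedAddCommGroup H] [InnerProductSpace ℂ H] [CompleteSpace H]
  [NormedAddCommGroup K] [InnerProductSpace ℂ K] [CompleteSpace K]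

/-- dimension of the kernel -/
def nn (T : H →L[ℂ] K) : Cardinal := Module.rank ℂ (LinearMap.ker (T : H →ₗ[ℂ] K))

/-- codimension of the range -/
def dd (T : H →L[ℂ] K) : Cardinal := Module.rank ℂ (K ⧸ LinearMap.range (T : H →ₗ[ℂ] K))

/-- bounded below -/
def BddBelowOp (T : H →L[ℂ] K) : Prop := ∃ c > 0, ∀ x, c * ‖x‖ ≤ ‖T x‖

/-- upper semi-Fredholm -/
def USF (T : H →L[ℂ] K) : Prop :=
  IsClosed (LinearMap.range (T : H →ₗ[ℂ] K) : Set K) ∧ nn T < Cardinal.aleph0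

/-- lower semi-Fredholm -/
def LSF (T : H →L[ℂ] K) : Prop := dd T < Cardinal.aleph0

def Fredholm (T : H →L[ℂ] K) : Prop := USF T ∧ LSF T

def FiniteAscent (T : H →L[ℂ] H) : Prop :=
  ∃ n : ℕ, LinearMap.ker ((T ^ n : H →L[ℂ] H) : H →ₗ[ℂ] H) = LinearMap.ker ((T ^ (n + 1) : H →L[ℂ] H) : H →ₗ[ℂ] H)

def FiniteDescent (T : H →L[ℂ] H) : Prop :=
  ∃ n : ℕ, LinearMap.range ((T ^ n : H →L[ℂ] H) : H →ₗ[ℂ] H) = LinearMap.range ((T ^ (n + 1) : H →L[ℂ] H) : H →ₗ[ℂ] H)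

def Browder (T : H →L[ℂ] H) : Prop := Fredholm T ∧ FiniteAscent T ∧ FiniteDescent T

/-- `T - λI` -/
def opl (T : H →L[ℂ] H) (z : ℂ) : H →L[ℂ] H := T - z • 1

/-- consistent in invertibility -/
def CI (T : H →L[ℂ] H) : Prop := ∀ S : H →L[ℂ] H, IsUnit (S * T) ↔ IsUnit (T * S)

/-- Kato (semi-regular) -/
def Kato (T : H →L[ℂ] H) : Prop :=
  IsClosed (LinearMap.range (T : H →ₗ[ℂ] H) : Set H) ∧
    ∀ n : ℕ, (LinearMap.ker (T : H →ₗ[ℂ] H) : Set H) ⊆ (LinearMap.range ((T ^ (n + 1) : H →L[ℂ] H) : H →ₗ[ℂ] H) : Set H)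

def specA (T : H →L[ℂ] H) : Set ℂ := {z | ¬ BddBelowOp (opl T z)}
def specEA (T : H →L[ℂ] H) : Set ℂ := {z | ¬ USF (opl T z) ∨ dd (opl T z) < nn (opl T z)}
def specP (T : H →L[ℂ] H) : Set ℂ := {z | LinearMap.ker (opl T z : H →ₗ[ℂ] H) ≠ ⊥}
def specB (T : H →L[ℂ] H) : Set ℂ := {z | ¬ Browder (opl T z)}
def specG (T : H →L[ℂ] H) : Set ℂ := {z | ¬ IsClosed (LinearMap.range (opl T z : H →ₗ[ℂ] H) : Set H)}
def specSFplus (T : H →L[ℂ] H) : Set ℂ := {z | ¬ USF (opl T z)}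
def specSFminus (T : H →L[ℂ] H) : Set ℂ := {z | ¬ LSF (opl T z)}
def specSF (T : H →L[ℂ] H) : Set ℂ := specSFplus T ∩ specSFminus T
def specCI (T : H →L[ℂ] H) : Set ℂ := {z | ¬ CI (opl T z)}

/-- accumulation points of a set -/
def accS (s : Set ℂ) : Set ℂ := {z | AccPt z (𝓟 s)}
/-- isolated points of a set -/
def isoS (s : Set ℂ) : Set ℂ := s \ accS s

/-- isolated eigenvalues of the spectrum -/
def E (T : H →L[ℂ] H) : Set ℂ := isoS (spectrum ℂ T) ∩ specP T

/-- property (UW_E) -/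
def UWEprop (T : H →L[ℂ] H) : Prop := specA T \ specEA T = E T


omit [CompleteSpace H] in
lemma isUnit_bij {A : H →L[ℂ] H} (h : IsUnit A) : Function.Bijective A := by
  obtain ⟨u, rfl⟩ := h
  have h1 : ∀ z, (↑u⁻¹ : H →L[ℂ] H) ((↑u : H →L[ℂ] H) z) = z := fun z =>
    show ((↑u⁻¹ * ↑u : H →L[ℂ] H)) z = z by rw [u.inv_mul]; rfl
  have h2 : ∀ z, (↑u : H →L[ℂ] H) ((↑u⁻¹ : H →L[ℂ] H) z) = z := fun z =>
    show ((↑u * ↑u⁻¹ : H →L[ℂ] H)) z = z by rw [u.mul_inv]; rfl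
  exact ⟨Function.LeftInverse.injective h1, Function.RightInverse.surjective h2⟩

omit [CompleteSpace H] in
lemma inj_of_unit_ST {T S : H →L[ℂ] H} (h : IsUnit (S * T)) : Function.Injective T := by
  intro x y hxy
  exact (isUnit_bij h).1 (show (S * T) x = (S * T) y by
    simp only [ContinuousLinearMap.mul_apply, hxy])

omit [CompleteSpace H] in
lemma surj_of_unit_TS {T S : H →L[ℂ] H} (h : IsUnit (T * S)) : Function.Surjective T := by
  intro y
  obtain ⟨x, hx⟩ := (isUnit_bij h).2 y
  exact ⟨S x, hx⟩

lemma closed_of_unit_ST {T S : H →L[ℂ] H} (h : IsUnit (S * T)) :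
    IsClosed (LinearMap.range (T : H →ₗ[ℂ] H) : Set H) := by
  obtain ⟨u, hu⟩ := h
  set V : H →L[ℂ] H := ↑u⁻¹ * S with hV
  have hb : ∀ x : H, ‖x‖ ≤ ‖V‖ * ‖T x‖ := by
    intro x
    have h2 : V (T x) = x := by
      show (↑u⁻¹ : H →L[ℂ] H) (S (T x)) = x
      rw [show S (T x) = (↑u : H →L[ℂ] H) x from by rw [hu]; rfl]
      exact show ((↑u⁻¹ * ↑u : H →L[ℂ] H)) x = x by rw [u.inv_mul]; rfl
    calc ‖x‖ = ‖V (T x)‖ := by rw [h2]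
    _ ≤ ‖V‖ * ‖T x‖ := ContinuousLinearMap.le_opNorm _ _
  have hal : AntilipschitzWith ‖V‖₊ T := ContinuousLinearMap.antilipschitz_of_bound T hb
  exact hal.isClosed_range T.uniformContinuous

lemma existsLeft {T : H →L[ℂ] H} (hinj : Function.Injective T)
    (hcl : IsClosed (LinearMap.range (T : H →ₗ[ℂ] H) : Set H)) : ∃ S : H →L[ℂ] H, S * T = 1 := by
  set M : Submodule ℂ H := LinearMap.range (T : H →ₗ[ℂ] H) with hM
  haveI : CompleteSpace M := hcl.completeSpace_coe
  set Tc : H →L[ℂ] M := T.codRestrict M (fun x => LinearMap.mem_range_self _ x) with hTc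
  have hk : LinearMap.ker (Tc : H →ₗ[ℂ] M) = ⊥ := by
    rw [Submodule.eq_bot_iff]
    intro x hx
    have : Tc x = 0 := hx
    have : T x = 0 := congrArg Subtype.val this
    exact hinj (by simpa using this)
  have hr : LinearMap.range (Tc : H →ₗ[ℂ] M) = ⊤ := by
    rw [LinearMap.range_eq_top]
    rintro ⟨y, hy⟩
    obtain ⟨x, hx⟩ := hy
    exact ⟨x, Subtype.ext hx⟩
  set e := ContinuousLinearEquiv.ofBijective Tc hk hr with he
  refine ⟨(e.symm : M →L[ℂ] H) ∘L (M.orthogonalProjection), ?_⟩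
  ext x
  show e.symm (M.orthogonalProjection (T x)) = x
  have h1 : M.orthogonalProjection (T x) = Tc x :=
    Submodule.orthogonalProjection_mem_subspace_eq_self (Tc x)
  rw [h1, he]
  exact ContinuousLinearEquiv.ofBijective_symm_apply_apply Tc hk hr x

lemma existsRight {T : H →L[ℂ] H} (hsurj : Function.Surjective T) :
    ∃ S : H →L[ℂ] H, T * S = 1 := by
  set N : Submodule ℂ H := (LinearMap.ker (T : H →ₗ[ℂ] H))ᗮ with hN
  haveI : CompleteSpace N := ((LinearMap.ker (T : H →ₗ[ℂ] H)).isClosed_orthogonal).completeSpace_coe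
  set f : N →L[ℂ] H := T ∘L N.subtypeL with hf
  have hk : LinearMap.ker (f : N →ₗ[ℂ] H) = ⊥ := by
    rw [Submodule.eq_bot_iff]
    intro x hx
    have h0 : T x.1 = 0 := hx
    have hxy' : x.1 ∈ LinearMap.ker (T : H →ₗ[ℂ] H) := h0
    have hmem : (x : H) ∈ (LinearMap.ker (T : H →ₗ[ℂ] H))ᗮ := x.2
    have := (Submodule.orthogonal_disjoint (LinearMap.ker (T : H →ₗ[ℂ] H))).le_bot ⟨hxy', hmem⟩
    exact Subtype.ext (by simpa using this)
  have hr : LinearMap.range (f : N →ₗ[ℂ] H) = ⊤ := by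
    rw [LinearMap.range_eq_top]
    intro y
    obtain ⟨x, hx⟩ := hsurj y
    haveI : CompleteSpace (LinearMap.ker (T : H →ₗ[ℂ] H)) := T.isClosed_ker.completeSpace_coe
    obtain ⟨k, hk', p, hp, hxkp⟩ := (LinearMap.ker (T : H →ₗ[ℂ] H)).exists_add_mem_mem_orthogonal x
    refine ⟨⟨p, hp⟩, ?_⟩
    show T p = y
    have : T x = T k + T p := by rw [hxkp, map_add]
    rw [show T k = 0 from LinearMap.mem_ker.mp hk'] at this
    simp only [zero_add] at this
    rw [← this, hx]
  set e := ContinuousLinearEquiv.ofBijective f hk hr with he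
  refine ⟨N.subtypeL ∘L (e.symm : H →L[ℂ] N), ?_⟩
  ext y
  show T ((e.symm y : N) : H) = y
  have : f (e.symm y) = y := by
    rw [he]; exact ContinuousLinearEquiv.ofBijective_apply_symm_apply f hk hr y
  exact this

lemma isUnit_of_bij {T : H →L[ℂ] H} (hk : LinearMap.ker (T : H →ₗ[ℂ] H) = ⊥)
    (hr : LinearMap.range (T : H →ₗ[ℂ] H) = ⊤) : IsUnit T := by
  set e := ContinuousLinearEquiv.ofBijective T hk hr with he
  refine ⟨⟨T, (e.symm : H →L[ℂ] H), ?_, ?_⟩, rfl⟩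
  · ext x
    show T (e.symm x) = x
    rw [he]; exact ContinuousLinearEquiv.ofBijective_apply_symm_apply T hk hr x
  · ext x
    show e.symm (T x) = x
    rw [he]; exact ContinuousLinearEquiv.ofBijective_symm_apply_apply T hk hr x

omit [CompleteSpace H] in
lemma ker_eq_bot_of_inj {T : H →L[ℂ] H} (hinj : Function.Injective T) :
    LinearMap.ker (T : H →ₗ[ℂ] H) = ⊥ := by
  rw [Submodule.eq_bot_iff]
  intro x hx
  have : T x = 0 := hx
  exact hinj (by simpa using this)


theorem CI_characterization
    (hinf : ¬ FiniteDimensional ℂ H) [TopologicalSpace.SeparableSpace H]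
    (T : H →L[ℂ] H) :
    CI T ↔
      (IsUnit T ∨
        ¬ IsClosed (LinearMap.range (T : H →ₗ[ℂ] H) : Set H) ∨
        (LinearMap.ker (T : H →ₗ[ℂ] H) ≠ ⊥ ∧ IsClosed (LinearMap.range (T : H →ₗ[ℂ] H) : Set H) ∧
          LinearMap.range (T : H →ₗ[ℂ] H) ≠ ⊤)) := by
  constructor
  · intro hCI
    by_contra hcon
    push_neg at hcon
    obtain ⟨hTU, hcl', h3⟩ := hcon
    by_cases hker : LinearMap.ker (T : H →ₗ[ℂ] H) = ⊥
    · have hinj : Function.Injective T := by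
        intro x y hxy
        have hmem : x - y ∈ LinearMap.ker (T : H →ₗ[ℂ] H) := by
          have : T (x - y) = 0 := by rw [map_sub, hxy, sub_self]
          exact this
        rw [hker] at hmem
        have := (Submodule.mem_bot ℂ).mp hmem
        rwa [sub_eq_zero] at this
      have hrange : LinearMap.range (T : H →ₗ[ℂ] H) ≠ ⊤ := fun h => hTU (isUnit_of_bij hker h)
      obtain ⟨S, hS⟩ := existsLeft hinj hcl'
      have h1 : IsUnit (S * T) := hS ▸ isUnit_one
      have h2 := (hCI S).mp h1
      exact hrange (LinearMap.range_eq_top.mpr (surj_of_unit_TS h2))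
    · have hrtop : LinearMap.range (T : H →ₗ[ℂ] H) = ⊤ := h3 hker hcl'
      have hsurj : Function.Surjective T := LinearMap.range_eq_top.mp hrtop
      obtain ⟨S, hS⟩ := existsRight hsurj
      have h2 : IsUnit (T * S) := hS ▸ isUnit_one
      have h1 := (hCI S).mpr h2
      exact hker (ker_eq_bot_of_inj (inj_of_unit_ST h1))
  · rintro (hU | hncl | ⟨hker, hcl, hrange⟩) <;> intro S
    · obtain ⟨u, rfl⟩ := hU
      rw [Units.isUnit_mul_units, Units.isUnit_units_mul]
    · constructor
      · intro h
        exact absurd (closed_of_unit_ST h) hncl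
      · intro h
        have hsurj := surj_of_unit_TS h
        have htop : (LinearMap.range (T : H →ₗ[ℂ] H) : Set H) = Set.univ := by
          rw [LinearMap.range_eq_top.mpr hsurj]
          rfl
        exact absurd (htop ▸ isClosed_univ) hncl
    · constructor
      · intro h
        exact absurd (ker_eq_bot_of_inj (inj_of_unit_ST h)) hker
      · intro h
        exact absurd (LinearMap.range_eq_top.mpr (surj_of_unit_TS h)) hrange


end UWE
end
end

section
/- Let T be a bounded operator on a complex Hilbert space H. Then a complex number λ belongs to the CI spectrum of T (the set of λ such that T − λI is not consistent in invertibility) if and only if T − λI is either bounded below but not invertible, or surjective but not invertible. -/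
open Set Filter Cardinal

noncomputable section

namespace UWE

universe u

variable {H K : Type u} [NormedAddCommGroup H] [InnerProductSpace ℂ H] [CompleteSpace H]
  [NormedAddCommGroup K] [InnerProductSpace ℂ K] [CompleteSpace K]

lemma isUnit_of_bijective {S : H →L[ℂ] H} (h : Function.Bijective S) : IsUnit S := by
  let e : H ≃L[ℂ] H := ContinuousLinearEquiv.ofBijective S
    (LinearMap.ker_eq_bot_of_injective h.1) (LinearMap.range_eq_top.mpr h.2)
  have he : ∀ x, e x = S x := fun _ => rfl
  refine ⟨⟨S, (e.symm : H →L[ℂ] H), ?_, ?_⟩, rfl⟩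
  · ext x
    show S (e.symm x) = x
    rw [← he]
    exact e.apply_symm_apply x
  · ext x
    show e.symm (S x) = x
    rw [← he]
    exact e.symm_apply_apply x

lemma exists_left_inverse {S : H →L[ℂ] H} (h : BddBelowOp S) : ∃ R : H →L[ℂ] H, R * S = 1 := by
  obtain ⟨c, hc, hb⟩ := h
  have hanti : AntilipschitzWith ⟨c⁻¹, le_of_lt (inv_pos.mpr hc)⟩ S := by
    apply ContinuousLinearMap.antilipschitz_of_bound
    intro x
    change ‖x‖ ≤ c⁻¹ * ‖S x‖
    rw [← div_eq_inv_mul, le_div_iff₀ hc]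
    linarith [hb x, mul_comm c ‖x‖]
  have hclosed : IsClosed (LinearMap.range (S : H →ₗ[ℂ] H) : Set H) := by
    rw [LinearMap.coe_range]; exact hanti.isClosed_range S.uniformContinuous
  set F : Submodule ℂ H := LinearMap.range (S : H →ₗ[ℂ] H) with hF
  haveI : CompleteSpace F := hclosed.completeSpace_coe
  set S' : H →L[ℂ] F := S.codRestrict F (fun x => LinearMap.mem_range_self _ x) with hS'
  have hker : LinearMap.ker (S' : H →ₗ[ℂ] F) = ⊥ := by
    rw [ContinuousLinearMap.ker_codRestrict]
    exact LinearMap.ker_eq_bot_of_injective hanti.injective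
  have hrange : LinearMap.range (S' : H →ₗ[ℂ] F) = ⊤ := by
    rw [Submodule.eq_top_iff']
    rintro ⟨y, x, hx⟩
    exact ⟨x, Subtype.ext hx⟩
  set e : H ≃L[ℂ] F := ContinuousLinearEquiv.ofBijective S' hker hrange with he
  refine ⟨(e.symm : F →L[ℂ] H).comp (F.orthogonalProjection), ?_⟩
  ext x
  have h1 : F.orthogonalProjection (S x) = e x := by
    have hm : S x ∈ F := LinearMap.mem_range_self _ x
    have h2 : F.orthogonalProjection ((⟨S x, hm⟩ : F) : H) = ⟨S x, hm⟩ :=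
      Submodule.orthogonalProjection_mem_subspace_eq_self _
    have h3 : e x = ⟨S x, hm⟩ := rfl
    rw [h3]
    exact h2
  simp only [ContinuousLinearMap.mul_apply, ContinuousLinearMap.coe_comp',
    Function.comp_apply, ContinuousLinearMap.one_apply]
  rw [h1]
  exact e.symm_apply_apply x

lemma exists_right_inverse {S : H →L[ℂ] H} (h : Function.Surjective S) :
    ∃ R : H →L[ℂ] H, S * R = 1 := by
  set N : Submodule ℂ H := LinearMap.ker (S : H →ₗ[ℂ] H) with hN
  haveI : CompleteSpace N := (ContinuousLinearMap.isClosed_ker S).completeSpace_coe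
  set S' : Nᗮ →L[ℂ] H := S.comp Nᗮ.subtypeL with hS'
  have hker : LinearMap.ker (S' : Nᗮ →ₗ[ℂ] H) = ⊥ := by
    rw [Submodule.eq_bot_iff]
    rintro ⟨x, hx⟩ hx0
    have hx0' : S x = 0 := by
      have := LinearMap.mem_ker.mp hx0
      simpa [hS'] using this
    have hxN : x ∈ N := hx0'
    have : x = 0 := Submodule.disjoint_def.mp N.orthogonal_disjoint x hxN hx
    exact Subtype.ext this
  have hrange : LinearMap.range (S' : Nᗮ →ₗ[ℂ] H) = ⊤ := by
    rw [Submodule.eq_top_iff']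
    intro y
    obtain ⟨x, hx⟩ := h y
    obtain ⟨a, ha, b, hb, hab⟩ := Submodule.exists_add_mem_mem_orthogonal (K := N) x
    refine ⟨⟨b, hb⟩, ?_⟩
    have hsa : S a = 0 := ha
    have : S b = y := by
      rw [hab, map_add, hsa, zero_add] at hx
      exact hx
    simpa [hS'] using this
  set e : Nᗮ ≃L[ℂ] H := ContinuousLinearEquiv.ofBijective S' hker hrange with he
  refine ⟨Nᗮ.subtypeL.comp (e.symm : H →L[ℂ] Nᗮ), ?_⟩
  ext y
  simp only [ContinuousLinearMap.mul_apply, ContinuousLinearMap.coe_comp',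
    Function.comp_apply, ContinuousLinearMap.one_apply]
  have : S' (e.symm y) = y := e.apply_symm_apply y
  simpa [hS'] using this

lemma bddBelow_of_isUnit_mul {S R : H →L[ℂ] H} (h : IsUnit (R * S)) : BddBelowOp S := by
  obtain ⟨u, hu⟩ := h
  set v : H →L[ℂ] H := (↑u⁻¹ : H →L[ℂ] H) * R with hv
  have hvS : ∀ x, v (S x) = x := by
    intro x
    have h1 : v * S = 1 := by
      rw [hv, mul_assoc, ← hu, u.inv_mul]
    have h2 : (v * S) x = (1 : H →L[ℂ] H) x := by rw [h1]
    simpa [ContinuousLinearMap.mul_apply] using h2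
  refine ⟨(‖v‖ + 1)⁻¹, by positivity, fun x => ?_⟩
  rw [inv_mul_le_iff₀ (by positivity)]
  calc ‖x‖ = ‖v (S x)‖ := by rw [hvS]
    _ ≤ ‖v‖ * ‖S x‖ := v.le_opNorm _
    _ ≤ (‖v‖ + 1) * ‖S x‖ := by nlinarith [norm_nonneg (S x)]

lemma surjective_of_isUnit_mul {S R : H →L[ℂ] H} (h : IsUnit (S * R)) :
    Function.Surjective S := by
  obtain ⟨u, hu⟩ := h
  intro y
  refine ⟨R ((↑u⁻¹ : H →L[ℂ] H) y), ?_⟩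
  have : ((S * R) * (↑u⁻¹ : H →L[ℂ] H)) y = y := by
    rw [← hu, u.mul_inv]
    rfl
  simpa [ContinuousLinearMap.mul_apply] using this

lemma BddBelowOp.injective {S : H →L[ℂ] H} (hbb : BddBelowOp S) : Function.Injective S := by
  obtain ⟨c, hc, hb⟩ := hbb
  intro a b hab
  have h1 : c * ‖a - b‖ ≤ ‖S (a - b)‖ := hb _
  rw [map_sub, hab, sub_self, norm_zero] at h1
  have : a - b = 0 := by
    rw [← norm_le_zero_iff]
    nlinarith
  exact sub_eq_zero.mp this

lemma isUnit_mul_swap {S R : H →L[ℂ] H} (hS : IsUnit S) (h : IsUnit (R * S)) :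
    IsUnit (S * R) := by
  obtain ⟨w, hw⟩ := hS
  obtain ⟨u, hu⟩ := h
  have hww : S * (↑w⁻¹ : H →L[ℂ] H) = 1 := by rw [← hw]; exact w.mul_inv
  have key : (↑(w * u * w⁻¹) : H →L[ℂ] H) = S * R :=
    calc (↑(w * u * w⁻¹) : H →L[ℂ] H) = ↑w * ↑u * ↑w⁻¹ := rfl
      _ = S * (R * S) * ↑w⁻¹ := by rw [hw, hu]
      _ = (S * R) * (S * ↑w⁻¹) := by noncomm_ring
      _ = S * R := by rw [hww, mul_one]
  exact key ▸ (w * u * w⁻¹).isUnit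

lemma isUnit_mul_swap' {S R : H →L[ℂ] H} (hS : IsUnit S) (h : IsUnit (S * R)) :
    IsUnit (R * S) := by
  obtain ⟨w, hw⟩ := hS
  obtain ⟨u, hu⟩ := h
  have hww : (↑w⁻¹ : H →L[ℂ] H) * S = 1 := by rw [← hw]; exact w.inv_mul
  have key : (↑(w⁻¹ * u * w) : H →L[ℂ] H) = R * S :=
    calc (↑(w⁻¹ * u * w) : H →L[ℂ] H) = ↑w⁻¹ * ↑u * ↑w := rfl
      _ = ↑w⁻¹ * (S * R) * S := by rw [hw, hu]
      _ = ((↑w⁻¹ : H →L[ℂ] H) * S) * (R * S) := by noncomm_ring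
      _ = R * S := by rw [hww, one_mul]
  exact key ▸ (w⁻¹ * u * w).isUnit

theorem mem_specCI_iff (T : H →L[ℂ] H) (z : ℂ) :
    z ∈ specCI T ↔
      ((BddBelowOp (opl T z) ∧ ¬ IsUnit (opl T z)) ∨
        (Function.Surjective (opl T z) ∧ ¬ IsUnit (opl T z))) := by
  set S : H →L[ℂ] H := opl T z with hS
  constructor
  · intro hci
    simp only [specCI, Set.mem_setOf_eq, CI, not_forall] at hci
    obtain ⟨R, hR⟩ := hci
    rw [iff_iff_implies_and_implies, not_and_or] at hR
    rcases hR with hR | hR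
    · push_neg at hR
      obtain ⟨h1, h2⟩ := hR
      have hbb : BddBelowOp S := bddBelow_of_isUnit_mul h1
      have hnu : ¬ IsUnit S := fun hu => h2 (isUnit_mul_swap hu h1)
      exact Or.inl ⟨hbb, hnu⟩
    · push_neg at hR
      obtain ⟨h1, h2⟩ := hR
      have hsurj : Function.Surjective S := surjective_of_isUnit_mul h1
      have hnu : ¬ IsUnit S := fun hu => h2 (isUnit_mul_swap' hu h1)
      exact Or.inr ⟨hsurj, hnu⟩
  · rintro (⟨hbb, hnu⟩ | ⟨hsurj, hnu⟩)
    · obtain ⟨R, hRS⟩ := exists_left_inverse hbb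
      simp only [specCI, Set.mem_setOf_eq, CI, not_forall]
      refine ⟨R, ?_⟩
      rw [hRS]
      simp only [isUnit_one, true_iff]
      intro hu
      apply hnu
      have hsurj : Function.Surjective S := surjective_of_isUnit_mul hu
      exact isUnit_of_bijective ⟨hbb.injective, hsurj⟩
    · obtain ⟨R, hSR⟩ := exists_right_inverse hsurj
      simp only [specCI, Set.mem_setOf_eq, CI, not_forall]
      refine ⟨R, ?_⟩
      rw [hSR]
      simp only [isUnit_one, iff_true]
      intro hu
      apply hnu
      have hbb : BddBelowOp S := bddBelow_of_isUnit_mul hu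
      exact isUnit_of_bijective ⟨hbb.injective, hsurj⟩

end UWE
end
end

section
/- For any bounded operator T on a complex Hilbert space, the CI spectrum σ_CI(T) is an open subset of ℂ. -/
open Set Filter Cardinal

noncomputable section

namespace UWE

universe u

variable {H K : Type u} [NormedAddCommGroup H] [InnerProductSpace ℂ H] [CompleteSpace H]
  [NormedAddCommGroup K] [InnerProductSpace ℂ K] [CompleteSpace K]

set_option linter.unusedSectionVars false

/-- In a monoid, a left inverse plus `IsUnit (a*b)` gives `IsUnit a`. -/
lemma isUnit_of_left_inv {M : Type*} [Monoid M] {a b : M} (h : b * a = 1)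
    (h2 : IsUnit (a * b)) : IsUnit a := by
  obtain ⟨v, hv⟩ := h2
  have h3 : a * (b * ↑v⁻¹) = 1 := by rw [← mul_assoc, ← hv, Units.mul_inv]
  have hbc : b * ↑v⁻¹ = b := by
    calc b * ↑v⁻¹ = 1 * (b * ↑v⁻¹) := (one_mul _).symm
    _ = (b * a) * (b * ↑v⁻¹) := by rw [h]
    _ = b * (a * (b * ↑v⁻¹)) := by rw [mul_assoc]
    _ = b := by rw [h3, mul_one]
  rw [hbc] at h3
  exact ⟨⟨a, b, h3, h⟩, rfl⟩

lemma isUnit_of_right_inv {M : Type*} [Monoid M] {a b : M} (h : a * b = 1)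
    (h2 : IsUnit (b * a)) : IsUnit a := by
  have hb : IsUnit b := isUnit_of_left_inv h h2
  have : a = ↑hb.unit⁻¹ := by
    calc a = a * 1 := (mul_one a).symm
    _ = a * (↑hb.unit * ↑hb.unit⁻¹) := by rw [Units.mul_inv]
    _ = (a * b) * ↑hb.unit⁻¹ := by rw [← mul_assoc, IsUnit.unit_spec]
    _ = ↑hb.unit⁻¹ := by rw [h, one_mul]
  rw [this]
  exact hb.unit⁻¹.isUnit

lemma notUnit_one_ne_zero {A : H →L[ℂ] H} (hA : ¬ IsUnit A) : (1 : H →L[ℂ] H) ≠ 0 := by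
  intro h10
  apply hA
  have : A = 1 := by
    calc A = 1 * A := (one_mul A).symm
    _ = 0 * A := by rw [h10]
    _ = 0 := zero_mul A
    _ = 1 := h10.symm
  rw [this]; exact isUnit_one

lemma adjoint_isUnit {A : H →L[ℂ] H} (h : IsUnit A) :
    IsUnit (ContinuousLinearMap.adjoint A) := by
  obtain ⟨⟨a, b, hab, hba⟩, rfl⟩ := h
  refine ⟨⟨ContinuousLinearMap.adjoint a, ContinuousLinearMap.adjoint b, ?_, ?_⟩, rfl⟩
  · show ContinuousLinearMap.adjoint a ∘L ContinuousLinearMap.adjoint b = 1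
    rw [← ContinuousLinearMap.adjoint_comp]
    show ContinuousLinearMap.adjoint (b * a) = 1
    rw [hba]
    show ContinuousLinearMap.adjoint (ContinuousLinearMap.id ℂ H) = 1
    rw [ContinuousLinearMap.adjoint_id]; rfl
  · show ContinuousLinearMap.adjoint b ∘L ContinuousLinearMap.adjoint a = 1
    rw [← ContinuousLinearMap.adjoint_comp]
    show ContinuousLinearMap.adjoint (a * b) = 1
    rw [hab]
    show ContinuousLinearMap.adjoint (ContinuousLinearMap.id ℂ H) = 1
    rw [ContinuousLinearMap.adjoint_id]; rfl

/-- key perturbation lemma: a left-invertible non-invertible operator stays non-invertible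
under perturbation by `w • 1` with `‖w‖ * ‖B‖ < 1/2`. -/
lemma key {A B : H →L[ℂ] H} (hBA : B * A = 1) (hA : ¬ IsUnit A) {w : ℂ}
    (hw : ‖w‖ * ‖B‖ < 1/2) : ¬ IsUnit (A - w • 1) := by
  intro hU
  -- lower bound
  have happ : ∀ x : H, B (A x) = x := by
    intro x
    have := DFunLike.congr_fun hBA x
    simpa [ContinuousLinearMap.mul_apply] using this
  have hlb : ∀ x : H, ‖x‖ ≤ ‖B‖ * ‖A x‖ := fun x => by
    calc ‖x‖ = ‖B (A x)‖ := by rw [happ]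
    _ ≤ ‖B‖ * ‖A x‖ := B.le_opNorm _
  have hBne : B ≠ 0 := by
    intro hB
    apply notUnit_one_ne_zero hA
    rw [← hBA, hB, zero_mul]
  have hB0 : 0 < ‖B‖ := norm_pos_iff.mpr hBne
  -- A injective
  have hinj : LinearMap.ker (A : H →ₗ[ℂ] H) = ⊥ := by
    rw [LinearMap.ker_eq_bot']
    intro x (hx : A x = 0)
    have := happ x
    rw [hx, map_zero] at this
    exact this.symm
  -- A not surjective
  have hns : LinearMap.range (A : H →ₗ[ℂ] H) ≠ ⊤ := by
    intro hs
    apply hA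
    let e := ContinuousLinearEquiv.ofBijective A hinj hs
    refine ⟨⟨A, (e.symm : H →L[ℂ] H), ?_, ?_⟩, rfl⟩
    · ext x
      simp [ContinuousLinearMap.mul_apply]
      show A (e.symm x) = x
      have : ∀ y, e y = A y := fun y => rfl
      rw [← this, e.apply_symm_apply]
    · ext x
      simp [ContinuousLinearMap.mul_apply]
      show e.symm (A x) = x
      have : ∀ y, e y = A y := fun y => rfl
      rw [← this, e.symm_apply_apply]
  -- range closed
  have hanti : AntilipschitzWith ‖B‖₊ A := A.antilipschitz_of_bound (fun x => by
    simpa [coe_nnnorm] using hlb x)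
  have hclosed : IsClosed (LinearMap.range (A : H →ₗ[ℂ] H) : Set H) := by
    have : (LinearMap.range (A : H →ₗ[ℂ] H) : Set H) = Set.range A := by
      ext y; simp [LinearMap.mem_range]
    rw [this]
    exact hanti.isClosed_range A.uniformContinuous
  haveI : CompleteSpace (LinearMap.range (A : H →ₗ[ℂ] H)) := hclosed.completeSpace_coe
  set M := LinearMap.range (A : H →ₗ[ℂ] H) with hM
  have hMo : Mᗮ ≠ ⊥ := by
    intro h
    exact hns (Submodule.orthogonal_eq_bot_iff.mp h)
  obtain ⟨y, hyM, hy0⟩ := Submodule.exists_mem_ne_zero_of_ne_bot hMo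
  set y₀ : H := (‖y‖⁻¹ : ℂ) • y with hy₀def
  have hy₀M : y₀ ∈ Mᗮ := Submodule.smul_mem _ _ hyM
  have hy₀ : ‖y₀‖ = 1 := norm_smul_inv_norm hy0
  -- surjectivity of A - w•1
  obtain ⟨x, hx⟩ : ∃ x, A x - w • x = y₀ := by
    obtain ⟨u, hu⟩ := hU
    refine ⟨(↑u⁻¹ : H →L[ℂ] H) y₀, ?_⟩
    have h2 : (A - w • 1) ((↑u⁻¹ : H →L[ℂ] H) y₀) = y₀ := by
      rw [← ContinuousLinearMap.mul_apply, ← hu, Units.mul_inv, ContinuousLinearMap.one_apply]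
    simpa [ContinuousLinearMap.sub_apply, ContinuousLinearMap.smul_apply] using h2
  -- Pythagoras-type estimate
  have hperp : (inner ℂ y₀ (A x) : ℂ) = 0 := by
    exact (Submodule.mem_orthogonal' M y₀).mp hy₀M (A x) ⟨x, rfl⟩
  have h1le : (1:ℝ) ≤ ‖y₀ - A x‖ := by
    have hin : (inner ℂ y₀ (y₀ - A x) : ℂ) = 1 := by
      rw [inner_sub_right, hperp, sub_zero, inner_self_eq_norm_sq_to_K, hy₀]
      norm_num
    calc (1:ℝ) = ‖(inner ℂ y₀ (y₀ - A x) : ℂ)‖ := by rw [hin]; simp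
    _ ≤ ‖y₀‖ * ‖y₀ - A x‖ := norm_inner_le_norm _ _
    _ = ‖y₀ - A x‖ := by rw [hy₀, one_mul]
  have hdiff : y₀ - A x = -(w • x) := by rw [← hx]; abel
  have h1wx : (1:ℝ) ≤ ‖w‖ * ‖x‖ := by
    rw [hdiff, norm_neg, norm_smul] at h1le
    exact h1le
  -- bound on ‖x‖
  have hAx : ‖A x‖ ≤ 1 + ‖w‖ * ‖x‖ := by
    have : A x = y₀ + w • x := by rw [← hx]; abel
    rw [this]
    calc ‖y₀ + w • x‖ ≤ ‖y₀‖ + ‖w • x‖ := norm_add_le _ _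
    _ = 1 + ‖w‖ * ‖x‖ := by rw [hy₀, norm_smul]
  have hxb : ‖x‖ ≤ ‖B‖ * (1 + ‖w‖ * ‖x‖) := le_trans (hlb x)
    (mul_le_mul_of_nonneg_left hAx (norm_nonneg B))
  nlinarith [norm_nonneg x, norm_nonneg w, mul_nonneg (norm_nonneg w) (norm_nonneg x),
    mul_le_mul_of_nonneg_right hw.le (norm_nonneg x)]


lemma left_inv_norm_pos {A B : H →L[ℂ] H} (hBA : B * A = 1) (hA : ¬ IsUnit A) : 0 < ‖B‖ := by
  refine norm_pos_iff.mpr ?_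
  intro hB
  apply notUnit_one_ne_zero hA
  rw [← hBA, hB, zero_mul]

lemma adjoint_one_eq : ContinuousLinearMap.adjoint (1 : H →L[ℂ] H) = 1 := by
  show ContinuousLinearMap.adjoint (ContinuousLinearMap.id ℂ H) = 1
  rw [ContinuousLinearMap.adjoint_id]; rfl

theorem specCI_isOpen (T : H →L[ℂ] H) : IsOpen (specCI T) := by
  rw [Metric.isOpen_iff]
  intro z hz
  have hz' : ¬ CI (opl T z) := hz
  rw [CI, not_forall] at hz'
  obtain ⟨S, hS⟩ := hz'
  set A := opl T z with hAdef
  by_cases h1 : IsUnit (S * A)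
  · -- left-invertible case
    have h2 : ¬ IsUnit (A * S) := fun h => hS (iff_of_true h1 h)
    obtain ⟨u, hu⟩ := h1
    set B := (↑u⁻¹ : H →L[ℂ] H) * S with hBdef
    have hBA : B * A = 1 := by rw [hBdef, mul_assoc, ← hu, Units.inv_mul]
    have hA : ¬ IsUnit A := by
      intro h
      apply h2
      have hAu : A * ↑h.unit⁻¹ = 1 := h.mul_val_inv
      have hswap : A * S = A * (S * A) * ↑h.unit⁻¹ := by
        rw [← mul_assoc A S A, mul_assoc (A * S) A, hAu, mul_one]
      rw [hswap]
      exact (h.mul ⟨u, hu⟩).mul h.unit⁻¹.isUnit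
    have hB0 : 0 < ‖B‖ := left_inv_norm_pos hBA hA
    refine ⟨1/(2*‖B‖), by positivity, ?_⟩
    intro z' hz'
    show ¬ CI (opl T z')
    set w := z' - z with hwdef
    have hwn : ‖w‖ * ‖B‖ < 1/2 := by
      have hlt : ‖w‖ < 1/(2*‖B‖) := by
        rw [hwdef]
        exact mem_ball_iff_norm.mp hz'
      calc ‖w‖*‖B‖ < (1/(2*‖B‖))*‖B‖ := mul_lt_mul_of_pos_right hlt hB0
      _ = 1/2 := by field_simp
    have hopl : opl T z' = A - w • 1 := by
      simp only [hAdef, opl, hwdef]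
      rw [sub_smul]; abel
    rw [hopl]
    have hwB : ‖w • B‖ < 1 := by
      rw [norm_smul]
      calc ‖w‖ * ‖B‖ < 1/2 := hwn
      _ < 1 := by norm_num
    set U := Units.oneSub (w • B) hwB with hUdef
    have hBA' : B * (A - w • 1) = ↑U := by
      rw [mul_sub, hBA, mul_smul_comm, mul_one, hUdef, Units.val_oneSub]
    set B' := (↑U⁻¹ : H →L[ℂ] H) * B with hB'def
    have hB'A' : B' * (A - w • 1) = 1 := by rw [hB'def, mul_assoc, hBA', Units.inv_mul]
    intro hCI
    have hR : IsUnit ((A - w • 1) * B') := (hCI B').mp (by rw [hB'A']; exact isUnit_one)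
    exact key hBA hA hwn (isUnit_of_left_inv hB'A' hR)
  · -- right-invertible case
    have h2 : IsUnit (A * S) := by
      by_contra h2
      exact hS (iff_of_false h1 h2)
    obtain ⟨u, hu⟩ := h2
    set B := S * (↑u⁻¹ : H →L[ℂ] H) with hBdef
    have hAB : A * B = 1 := by rw [hBdef, ← mul_assoc, ← hu, Units.mul_inv]
    have hA : ¬ IsUnit A := by
      intro h
      apply h1
      have hAu : ↑h.unit⁻¹ * A = 1 := h.val_inv_mul
      have hswap : S * A = ↑h.unit⁻¹ * ((A * S) * A) := by
        rw [← mul_assoc, ← mul_assoc, hAu, one_mul]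
      rw [hswap]
      exact (h.unit⁻¹.isUnit.mul ⟨u, hu⟩).mul h
    have hBAd : (ContinuousLinearMap.adjoint B) * (ContinuousLinearMap.adjoint A) = 1 := by
      show ContinuousLinearMap.adjoint B ∘L ContinuousLinearMap.adjoint A = 1
      rw [← ContinuousLinearMap.adjoint_comp]
      show ContinuousLinearMap.adjoint (A * B) = 1
      rw [hAB, adjoint_one_eq]
    have hAd : ¬ IsUnit (ContinuousLinearMap.adjoint A) := by
      intro h
      apply hA
      have h' := adjoint_isUnit h
      rwa [ContinuousLinearMap.adjoint_adjoint] at h'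
    have hB0 : 0 < ‖B‖ := by
      have h' := left_inv_norm_pos hBAd hAd
      rwa [ContinuousLinearMap.adjoint.norm_map] at h'
    refine ⟨1/(2*‖B‖), by positivity, ?_⟩
    intro z' hz'
    show ¬ CI (opl T z')
    set w := z' - z with hwdef
    have hwn : ‖w‖ * ‖B‖ < 1/2 := by
      have hlt : ‖w‖ < 1/(2*‖B‖) := by
        rw [hwdef]
        exact mem_ball_iff_norm.mp hz'
      calc ‖w‖*‖B‖ < (1/(2*‖B‖))*‖B‖ := mul_lt_mul_of_pos_right hlt hB0
      _ = 1/2 := by field_simp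
    have hopl : opl T z' = A - w • 1 := by
      simp only [hAdef, opl, hwdef]
      rw [sub_smul]; abel
    rw [hopl]
    -- non-invertibility via adjoint
    have hadj_sub : ContinuousLinearMap.adjoint (A - w • 1)
        = ContinuousLinearMap.adjoint A - (starRingEnd ℂ w) • 1 := by
      rw [map_sub, map_smulₛₗ, adjoint_one_eq]
    have hnotU : ¬ IsUnit (A - w • 1) := by
      intro h
      have hwn' : ‖starRingEnd ℂ w‖ * ‖ContinuousLinearMap.adjoint B‖ < 1/2 := by
        rwa [RCLike.norm_conj, ContinuousLinearMap.adjoint.norm_map]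
      apply key hBAd hAd hwn'
      rw [← hadj_sub]
      exact adjoint_isUnit h
    have hwB : ‖w • B‖ < 1 := by
      rw [norm_smul]
      calc ‖w‖ * ‖B‖ < 1/2 := hwn
      _ < 1 := by norm_num
    set U := Units.oneSub (w • B) hwB with hUdef
    have hAB' : (A - w • 1) * B = ↑U := by
      rw [sub_mul, hAB, smul_mul_assoc, one_mul, hUdef, Units.val_oneSub]
    set B' := B * (↑U⁻¹ : H →L[ℂ] H) with hB'def
    have hA'B' : (A - w • 1) * B' = 1 := by rw [hB'def, ← mul_assoc, hAB', Units.mul_inv]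
    intro hCI
    have hL : IsUnit (B' * (A - w • 1)) := (hCI B').mpr (by rw [hA'B']; exact isUnit_one)
    exact hnotU (isUnit_of_right_inv hA'B' hL)

end UWE
end
end

section
/- Let H, K be Hilbert spaces, A ∈ B(H) upper semi-Fredholm with d(A) = ∞ where d denotes codimension of range, B ∈ B(K) with closed range, n(B) = ∞, and suppose n(A) < d(B) (both finite or d(B) infinite). Define C : K → H as T on ker(B) and 0 on ker(B)^⊥, where T : ker(B) → range(A)^⊥ is an invertible isometry (which exists since both spaces are infinite-dimensional). Then ker(M_C) = ker(A) ⊕ {0} and range(M_C) is closed, where M_C = [[A, C],[0, B]]. -/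
open Set Filter Cardinal

noncomputable section

namespace UWE

universe u

variable {H K : Type u} [NormedAddCommGroup H] [InnerProductSpace ℂ H] [CompleteSpace H]
  [NormedAddCommGroup K] [InnerProductSpace ℂ K] [CompleteSpace K]

/-- the upper triangular operator matrix `[[A, C], [0, B]]` acting on `H ⊕ K` -/
def MC (A : H →L[ℂ] H) (B : K →L[ℂ] K) (C : K →L[ℂ] H) :
    WithLp 2 (H × K) →L[ℂ] WithLp 2 (H × K) :=
  letI e := WithLp.prodContinuousLinearEquiv 2 ℂ H K
  (e.symm.toContinuousLinearMap.comp
    ((A.comp (ContinuousLinearMap.fst ℂ H K) + C.comp (ContinuousLinearMap.snd ℂ H K)).prod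
      (B.comp (ContinuousLinearMap.snd ℂ H K)))).comp e.toContinuousLinearMap

theorem kernel_and_closed_range_of_special_C
    (A : H →L[ℂ] H) (B : K →L[ℂ] K) (C : K →L[ℂ] H)
    (hUSF : USF A) (hdA : Cardinal.aleph0 ≤ dd A)
    (hBcl : IsClosed (LinearMap.range (B : K →ₗ[ℂ] K) : Set K)) (hnB : Cardinal.aleph0 ≤ nn B)
    (hnd : nn A < dd B)
    (Tiso : (LinearMap.ker (B : K →ₗ[ℂ] K)) ≃ₗᵢ[ℂ] ((LinearMap.range (A : H →ₗ[ℂ] H))ᗮ : Submodule ℂ H))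
    (hC1 : ∀ y : LinearMap.ker (B : K →ₗ[ℂ] K), C (y : K) = (Tiso y : H))
    (hC2 : ∀ y ∈ ((LinearMap.ker (B : K →ₗ[ℂ] K))ᗮ : Submodule ℂ K), C y = 0) :
    (∀ v : WithLp 2 (H × K),
      v ∈ LinearMap.ker (MC A B C : WithLp 2 (H × K) →ₗ[ℂ] WithLp 2 (H × K)) ↔
        ((WithLp.prodContinuousLinearEquiv 2 ℂ H K) v).1 ∈ LinearMap.ker (A : H →ₗ[ℂ] H) ∧
        ((WithLp.prodContinuousLinearEquiv 2 ℂ H K) v).2 = 0) ∧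
      IsClosed (LinearMap.range (MC A B C : WithLp 2 (H × K) →ₗ[ℂ] WithLp 2 (H × K)) : Set (WithLp 2 (H × K))) := by
  classical
  set e := WithLp.prodContinuousLinearEquiv 2 ℂ H K with he
  haveI : CompleteSpace (LinearMap.range (A : H →ₗ[ℂ] H) : Submodule ℂ H) := hUSF.1.completeSpace_coe
  haveI : CompleteSpace (LinearMap.ker (B : K →ₗ[ℂ] K) : Submodule ℂ K) :=
    (ContinuousLinearMap.isClosed_ker B).completeSpace_coe
  have hMC : ∀ v : WithLp 2 (H × K),
      e (MC A B C v) = (A (e v).1 + C (e v).2, B (e v).2) := by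
    intro v; rfl
  -- orthogonality helper
  have horth : ∀ (a b : H), a ∈ LinearMap.range (A : H →ₗ[ℂ] H) → b ∈ (LinearMap.range (A : H →ₗ[ℂ] H))ᗮ →
      a + b = 0 → a = 0 ∧ b = 0 := by
    intro a b ha hb hab
    have hba : b = -a := eq_neg_of_add_eq_zero_right hab
    have hbmem : b ∈ LinearMap.range (A : H →ₗ[ℂ] H) := hba ▸ neg_mem ha
    have hb0 : b = 0 :=
      (Submodule.mem_bot ℂ).mp
        ((Submodule.orthogonal_disjoint (LinearMap.range (A : H →ₗ[ℂ] H))).le_bot ⟨hbmem, hb⟩)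
    constructor
    · have : a = -b := eq_neg_of_add_eq_zero_left hab
      simp [this, hb0]
    · exact hb0
  constructor
  · intro v
    constructor
    · intro hv
      have hv0 : MC A B C v = 0 := hv
      have h2 : (A (e v).1 + C (e v).2, B (e v).2) = ((0 : H), (0 : K)) := by
        rw [← hMC v, hv0]; simp; rfl
      have hBy : B (e v).2 = 0 := congrArg Prod.snd h2
      have hsum : A (e v).1 + C (e v).2 = 0 := congrArg Prod.fst h2
      have hy : (e v).2 ∈ LinearMap.ker (B : K →ₗ[ℂ] K) := hBy
      have hCy : C (e v).2 = (Tiso ⟨(e v).2, hy⟩ : H) := hC1 ⟨(e v).2, hy⟩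
      have hmem : (Tiso ⟨(e v).2, hy⟩ : H) ∈ (LinearMap.range (A : H →ₗ[ℂ] H))ᗮ :=
        (Tiso ⟨(e v).2, hy⟩).2
      have := horth (A (e v).1) (C (e v).2) (LinearMap.mem_range_self _ _)
        (hCy ▸ hmem) hsum
      refine ⟨this.1, ?_⟩
      have ht : Tiso ⟨(e v).2, hy⟩ = 0 := by
        apply Subtype.ext
        rw [← hCy]
        exact this.2
      have : (⟨(e v).2, hy⟩ : LinearMap.ker (B : K →ₗ[ℂ] K)) = 0 := by
        apply Tiso.injective
        simp [ht]
      exact congrArg Subtype.val this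
    · rintro ⟨hx, hy⟩
      show MC A B C v = 0
      apply e.injective
      rw [hMC v, hy]
      have hx0 : A (e v).1 = 0 := hx
      simp [hx0]
  · have hset : (LinearMap.range (MC A B C : WithLp 2 (H × K) →ₗ[ℂ] WithLp 2 (H × K)) : Set (WithLp 2 (H × K)))
        = ⇑e ⁻¹' (Set.univ ×ˢ (LinearMap.range (B : K →ₗ[ℂ] K) : Set K)) := by
      ext w
      constructor
      · rintro ⟨v, rfl⟩
        have := hMC v
        constructor
        · trivial
        · show (e (MC A B C v)).2 ∈ (LinearMap.range (B : K →ₗ[ℂ] K) : Set K)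
          rw [this]
          exact LinearMap.mem_range_self _ _
      · rintro ⟨-, hw2⟩
        obtain ⟨y₀, hy₀⟩ := hw2
        obtain ⟨a, ha, b, hb, hab⟩ :=
          (LinearMap.range (A : H →ₗ[ℂ] H)).exists_add_mem_mem_orthogonal (e w).1
        obtain ⟨x, hx⟩ := ha
        set y₁ : LinearMap.ker (B : K →ₗ[ℂ] K) := Tiso.symm ⟨b, hb⟩ with hy₁
        set y₂ : K := y₀ - (Submodule.orthogonalProjectionOnto (LinearMap.ker (B : K →ₗ[ℂ] K)) y₀ : K) with hy₂
        have hy₂mem : y₂ ∈ (LinearMap.ker (B : K →ₗ[ℂ] K))ᗮ :=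
          Submodule.sub_starProjection_mem_orthogonal (K := LinearMap.ker (B : K →ₗ[ℂ] K)) y₀
        refine ⟨e.symm (x, (y₁ : K) + y₂), ?_⟩
        apply e.injective
        show e (MC A B C (e.symm (x, (y₁ : K) + y₂))) = e w
        rw [hMC]
        have hee : e (e.symm (x, (y₁ : K) + y₂)) = (x, (y₁ : K) + y₂) := e.apply_symm_apply _
        rw [hee]
        have hCy : C ((y₁ : K) + y₂) = b := by
          rw [map_add, hC1 y₁, hC2 y₂ hy₂mem, add_zero, hy₁]
          simp
        have hBy : B ((y₁ : K) + y₂) = (e w).2 := by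
          rw [map_add]
          have h1 : B (y₁ : K) = 0 := y₁.2
          have h2 : B y₂ = B y₀ := by
            rw [hy₂, map_sub]
            have : B ((Submodule.orthogonalProjectionOnto (LinearMap.ker (B : K →ₗ[ℂ] K)) y₀ : K)) = 0 :=
              (Submodule.orthogonalProjectionOnto (LinearMap.ker (B : K →ₗ[ℂ] K)) y₀).2
            rw [this, sub_zero]
          rw [h1, h2, zero_add]; exact hy₀
        have : (A x + C ((y₁ : K) + y₂), B ((y₁ : K) + y₂)) = ((e w).1, (e w).2) := by
          rw [hCy, hBy, show A x = a from hx, hab]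
        rw [this]
    rw [hset]
    exact (isClosed_univ.prod hBcl).preimage e.continuous

end UWE
end
end

section
/- Let A, B ∈ B(ℓ²) be defined by A(x₁, x₂, x₃, …) = (0, x₁, 0, x₂, 0, x₃, …) and B(x₁, x₂, x₃, …) = (x₂, x₄, x₆, …). Then for every λ with |λ| < 1, A − λI is upper semi-Fredholm with n(A − λI) = 0 and d(A − λI) = ∞, and n(B − λI) > 0; hence Ω(A; B) ⊇ {λ ∈ ℂ : |λ| < 1}. -/
open Set Filter Cardinal

noncomputable section

namespace UWE

universe u

variable {H K : Type u} [NormedAddCommGroup H] [InnerProductSpace ℂ H] [CompleteSpace H]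
  [NormedAddCommGroup K] [InnerProductSpace ℂ K] [CompleteSpace K]

local notation "ℓ2" => lp (fun _ : ℕ => ℂ) 2

/-- the `(A,B)` entanglement stable spectrum `Ω(A; B)` -/
def Omega (A : H →L[ℂ] H) (B : K →L[ℂ] K) : Set ℂ :=
  {z | USF (opl A z) ∧ Cardinal.aleph0 ≤ dd (opl A z) ∧ 0 < nn (opl A z) + nn (opl B z)}


/-! ### Auxiliary constructions for the proof -/

/-- coordinates of an eigenvector family for the "select odd entries" operator:
`Faux μ k` is supported on `{2 ^ j * (2 * k + 3) - 1 : j ∈ ℕ}` with value `μ ^ j` there. -/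
def Faux (μ : ℂ) (k : ℕ) (n : ℕ) : ℂ :=
  if (n + 1) / 2 ^ ((n + 1).factorization 2) = 2 * k + 3 then μ ^ ((n + 1).factorization 2)
  else 0

lemma fact2_succ (n : ℕ) : (2 * (n + 1)).factorization 2 = (n + 1).factorization 2 + 1 := by
  rw [Nat.factorization_mul (by norm_num) (Nat.succ_ne_zero n)]
  simp [Nat.Prime.factorization Nat.prime_two, add_comm]

lemma Faux_succ (μ : ℂ) (k n : ℕ) : Faux μ k (2 * n + 1) = μ * Faux μ k n := by
  have h1 : 2 * n + 1 + 1 = 2 * (n + 1) := by ring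
  unfold Faux
  rw [h1, fact2_succ, pow_succ']
  rw [Nat.mul_div_mul_left _ _ (by norm_num : (0:ℕ) < 2)]
  split
  · rw [pow_succ]; ring
  · ring

lemma Faux_even (μ : ℂ) (k i : ℕ) : Faux μ k (2 * i + 2) = if k = i then 1 else 0 := by
  have h1 : 2 * i + 2 + 1 = 2 * i + 3 := by ring
  have h2 : (2 * i + 3).factorization 2 = 0 :=
    Nat.factorization_eq_zero_of_not_dvd (by omega)
  unfold Faux
  rw [h1, h2]
  simp only [pow_zero, Nat.div_one]
  by_cases h : k = i
  · simp [h]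
  · rw [if_neg (by omega), if_neg h]

lemma Faux_orbit (μ : ℂ) (k j : ℕ) : Faux μ k (2 ^ j * (2 * k + 3) - 1) = μ ^ j := by
  have hpos : 1 ≤ 2 ^ j * (2 * k + 3) := Nat.one_le_iff_ne_zero.2 (by positivity)
  have h1 : 2 ^ j * (2 * k + 3) - 1 + 1 = 2 ^ j * (2 * k + 3) := Nat.succ_pred_eq_of_pos hpos
  have h2 : (2 ^ j * (2 * k + 3)).factorization 2 = j := by
    rw [Nat.factorization_mul (by positivity) (by omega)]
    simp [Nat.Prime.factorization_pow Nat.prime_two,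
      Nat.factorization_eq_zero_of_not_dvd (show ¬ 2 ∣ 2*k+3 by omega)]
  unfold Faux
  rw [h1, h2, Nat.mul_div_cancel_left _ (by positivity), if_pos rfl]

lemma Faux_zero_off (μ : ℂ) (k n : ℕ) (h : ∀ j, n ≠ 2 ^ j * (2 * k + 3) - 1) :
    Faux μ k n = 0 := by
  unfold Faux
  rw [if_neg]
  intro hc
  have hdvd : 2 ^ ((n+1).factorization 2) ∣ n + 1 := Nat.ordProj_dvd _ _
  have : n + 1 = 2 ^ ((n+1).factorization 2) * (2 * k + 3) := by
    conv_lhs => rw [← Nat.div_mul_cancel hdvd]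
    rw [hc]; ring
  exact h ((n+1).factorization 2) (by omega)

lemma Faux_mem (μ : ℂ) (hμ : ‖μ‖ < 1) (k : ℕ) : Memℓp (Faux μ k) 2 := by
  apply memℓp_gen
  have ht : ((2:ENNReal)).toReal = 2 := by norm_num
  rw [ht]
  set f : ℕ → ℝ := fun n => ‖Faux μ k n‖ ^ (2:ℝ) with hf
  have hinj : Function.Injective (fun j : ℕ => 2 ^ j * (2 * k + 3) - 1) := by
    intro a b hab
    simp only at hab
    have : 2 ^ a * (2 * k + 3) = 2 ^ b * (2 * k + 3) := by
      have ha : 1 ≤ 2 ^ a * (2 * k + 3) := Nat.one_le_iff_ne_zero.2 (by positivity)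
      have hb : 1 ≤ 2 ^ b * (2 * k + 3) := Nat.one_le_iff_ne_zero.2 (by positivity)
      omega
    have h2 : (2:ℕ) ^ a = 2 ^ b := Nat.eq_of_mul_eq_mul_right (by omega) this
    exact Nat.pow_right_injective le_rfl h2
  rw [← Function.Injective.summable_iff hinj]
  · have : (f ∘ fun j : ℕ => 2 ^ j * (2 * k + 3) - 1) = fun j => (‖μ‖ ^ 2) ^ j := by
      funext j
      simp only [Function.comp_apply, hf, Faux_orbit, norm_pow, Real.rpow_two]
      ring
    rw [this]
    exact summable_geometric_of_lt_one (by positivity) (by nlinarith [norm_nonneg μ])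
  · intro n hn
    have : ∀ j, n ≠ 2 ^ j * (2 * k + 3) - 1 := by
      intro j hj; exact hn ⟨j, hj.symm⟩
    simp [hf, Faux_zero_off μ k n this]

/-- the eigenvector family as elements of `ℓ²` -/
def Gaux (μ : ℂ) (hμ : ‖μ‖ < 1) (k : ℕ) : lp (fun _ : ℕ => ℂ) 2 := ⟨Faux μ k, Faux_mem μ hμ k⟩

@[simp] lemma Gaux_apply (μ : ℂ) (hμ : ‖μ‖ < 1) (k n : ℕ) :
    (Gaux μ hμ k : ∀ _ : ℕ, ℂ) n = Faux μ k n := rfl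

/-- the coercion of `ℓ²` to functions, as a linear map -/
def coeLaux : lp (fun _ : ℕ => ℂ) 2 →ₗ[ℂ] (ℕ → ℂ) where
  toFun f := f
  map_add' := lp.coeFn_add
  map_smul' := lp.coeFn_smul

lemma Gaux_li (μ : ℂ) (hμ : ‖μ‖ < 1) : LinearIndependent ℂ (Gaux μ hμ) := by
  rw [linearIndependent_iff']
  intro s c hsum k hk
  have h2 := congrArg coeLaux hsum
  rw [map_sum, map_zero] at h2
  have h3 := congrFun h2 (2 * k + 2)
  simp only [coeLaux, LinearMap.coe_mk, AddHom.coe_mk, Finset.sum_apply, Pi.smul_apply,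
    lp.coeFn_smul, Pi.zero_apply, Gaux_apply, Faux_even, smul_eq_mul] at h3
  rw [Finset.sum_congr rfl (fun i _ => by rw [mul_ite, mul_one, mul_zero]),
    Finset.sum_ite_eq' s k c, if_pos hk] at h3
  exact h3

lemma Gaux_ne_zero (μ : ℂ) (hμ : ‖μ‖ < 1) (k : ℕ) : Gaux μ hμ k ≠ 0 := by
  intro h
  have := congrFun
    (congrArg (fun f : lp (fun _ : ℕ => ℂ) 2 => (f : ∀ _ : ℕ, ℂ)) h) (2 * k + 2)
  simp [Faux_even] at this

set_option maxHeartbeats 1000000 in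
theorem Omega_contains_open_unit_disc
    (A B : ℓ2 →L[ℂ] ℓ2)
    (hAeven : ∀ (x : ℓ2) (n : ℕ), (A x : ∀ _ : ℕ, ℂ) (2 * n) = 0)
    (hAodd : ∀ (x : ℓ2) (n : ℕ), (A x : ∀ _ : ℕ, ℂ) (2 * n + 1) = (x : ∀ _ : ℕ, ℂ) n)
    (hB : ∀ (x : ℓ2) (n : ℕ), (B x : ∀ _ : ℕ, ℂ) n = (x : ∀ _ : ℕ, ℂ) (2 * n + 1)) :
    (∀ z : ℂ, ‖z‖ < 1 →
      USF (opl A z) ∧ nn (opl A z) = 0 ∧ Cardinal.aleph0 ≤ dd (opl A z) ∧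
        0 < nn (opl B z)) ∧
      {z : ℂ | ‖z‖ < 1} ⊆ Omega A B := by
  have main : ∀ z : ℂ, ‖z‖ < 1 →
      USF (opl A z) ∧ nn (opl A z) = 0 ∧ Cardinal.aleph0 ≤ dd (opl A z) ∧
        0 < nn (opl B z) := by
    intro z hz
    have hopl : ∀ (T : ℓ2 →L[ℂ] ℓ2) (w : ℂ) (x : ℓ2), opl T w x = T x - w • x := by
      intro T w x
      simp [opl, ContinuousLinearMap.sub_apply, ContinuousLinearMap.smul_apply,
        ContinuousLinearMap.one_apply]
    -- summability of squared coordinates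
    have hsum2 : ∀ x : ℓ2, Summable (fun n => ‖(x : ∀ _ : ℕ, ℂ) n‖ ^ (2:ℝ)) := by
      intro x
      have := (lp.memℓp x).summable (p := 2) (by norm_num)
      simpa using this
    -- A is an isometry
    have hiso : ∀ x : ℓ2, ‖A x‖ = ‖x‖ := by
      intro x
      have hpos : (0:ℝ) < (2:ENNReal).toReal := by norm_num
      have h1 : ‖A x‖ ^ (2:ℝ) = ∑' n, ‖(A x : ∀ _ : ℕ, ℂ) n‖ ^ (2:ℝ) := by
        simpa using lp.norm_rpow_eq_tsum hpos (A x)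
      have h2 : ‖x‖ ^ (2:ℝ) = ∑' n, ‖(x : ∀ _ : ℕ, ℂ) n‖ ^ (2:ℝ) := by
        simpa using lp.norm_rpow_eq_tsum hpos x
      have hAe : ∀ k, ‖(A x : ∀ _:ℕ, ℂ) (2*k)‖ ^ (2:ℝ) = 0 := by
        intro k; rw [hAeven x k]; simp
      have hAo : ∀ k, ‖(A x : ∀ _:ℕ, ℂ) (2*k+1)‖ ^ (2:ℝ) = ‖(x : ∀ _:ℕ, ℂ) k‖ ^ (2:ℝ) := by
        intro k; rw [hAodd x k]
      have hSe : Summable (fun k => ‖(A x : ∀ _:ℕ, ℂ) (2*k)‖ ^ (2:ℝ)) := by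
        rw [funext hAe]; exact summable_zero
      have hSo : Summable (fun k => ‖(A x : ∀ _:ℕ, ℂ) (2*k+1)‖ ^ (2:ℝ)) := by
        rw [funext hAo]; exact hsum2 x
      have hT := tsum_even_add_odd (f := fun n => ‖(A x : ∀ _ : ℕ, ℂ) n‖ ^ (2:ℝ)) hSe hSo
      have e1 : ∑' k, ‖(A x : ∀ _:ℕ, ℂ) (2*k)‖ ^ (2:ℝ) = 0 := by
        rw [tsum_congr hAe]; exact tsum_zero
      have e2 : ∑' k, ‖(A x : ∀ _:ℕ, ℂ) (2*k+1)‖ ^ (2:ℝ) = ∑' k, ‖(x : ∀ _:ℕ, ℂ) k‖ ^ (2:ℝ) :=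
        tsum_congr hAo
      have hsq : ‖A x‖ ^ (2:ℝ) = ‖x‖ ^ (2:ℝ) := by rw [h1, h2, ← hT, e1, e2, zero_add]
      have ha := norm_nonneg (A x); have hb := norm_nonneg x
      rw [Real.rpow_two, Real.rpow_two] at hsq
      exact (sq_eq_sq₀ ha hb).1 hsq
    have hc : (0:ℝ) < 1 - ‖z‖ := by linarith
    -- A - z is bounded below
    have hlb : ∀ x : ℓ2, (1 - ‖z‖) * ‖x‖ ≤ ‖opl A z x‖ := by
      intro x
      rw [hopl]
      calc (1 - ‖z‖) * ‖x‖ = ‖A x‖ - ‖z • x‖ := by rw [hiso x, norm_smul]; ring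
        _ ≤ ‖A x - z • x‖ := norm_sub_norm_le _ _
    have hanti : AntilipschitzWith ((1 - ‖z‖)⁻¹.toNNReal) (opl A z) := by
      apply ContinuousLinearMap.antilipschitz_of_bound
      intro x
      rw [Real.coe_toNNReal _ (by positivity)]
      calc ‖x‖ = (1 - ‖z‖)⁻¹ * ((1 - ‖z‖) * ‖x‖) := (inv_mul_cancel_left₀ hc.ne' ‖x‖).symm
        _ ≤ (1 - ‖z‖)⁻¹ * ‖opl A z x‖ :=
          mul_le_mul_of_nonneg_left (hlb x) (by positivity)
    have hclosed : IsClosed (LinearMap.range (opl A z : ℓ2 →ₗ[ℂ] ℓ2) : Set ℓ2) := by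
      rw [LinearMap.coe_range]
      exact hanti.isClosed_range (opl A z).uniformContinuous
    have hker : LinearMap.ker (opl A z : ℓ2 →ₗ[ℂ] ℓ2) = ⊥ := by
      rw [LinearMap.ker_eq_bot']
      intro x hx
      have h := hlb x
      rw [show opl A z x = 0 from hx, norm_zero] at h
      have : ‖x‖ = 0 := by nlinarith [norm_nonneg x]
      exact norm_eq_zero.1 this
    have hnnA : nn (opl A z) = 0 := by
      rw [nn, hker]
      exact rank_bot ℂ ℓ2
    have hUSF : USF (opl A z) := ⟨hclosed, by rw [hnnA]; exact Cardinal.aleph0_pos⟩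
    -- the eigenvector family of B
    have hGeig : ∀ (μ : ℂ) (hμ : ‖μ‖ < 1) (k : ℕ), opl B μ (Gaux μ hμ k) = 0 := by
      intro μ hμ k
      apply lp.ext
      funext n
      have h1 : ((opl B μ) (Gaux μ hμ k) : ∀ _ : ℕ, ℂ) n
          = (B (Gaux μ hμ k) : ∀ _:ℕ, ℂ) n - μ * (Gaux μ hμ k : ∀ _:ℕ, ℂ) n := by
        rw [hopl]
        simp [lp.coeFn_sub, lp.coeFn_smul]
        rfl
      show ((opl B μ) (Gaux μ hμ k) : ∀ _ : ℕ, ℂ) n = ((0 : ℓ2) : ∀ _ : ℕ, ℂ) n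
      rw [h1, hB, Gaux_apply, Gaux_apply, Faux_succ, lp.coeFn_zero]
      ring_nf
      rfl
    have hnnB : 0 < nn (opl B z) := by
      rw [nn, rank_pos_iff_exists_ne_zero]
      refine ⟨⟨Gaux z hz 0, LinearMap.mem_ker.2 (hGeig z hz 0)⟩, ?_⟩
      intro h
      exact Gaux_ne_zero z hz 0 (by simpa using congrArg Subtype.val h)
    -- the adjoint relation between A and B
    have hadj : ∀ y x : ℓ2, (inner ℂ y (A x) : ℂ) = inner ℂ (B y) x := by
      intro y x
      rw [lp.inner_eq_tsum, lp.inner_eq_tsum]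
      have he : ∀ k, (inner ℂ ((y : ∀ _:ℕ, ℂ) (2*k)) ((A x : ∀ _:ℕ, ℂ) (2*k)) : ℂ) = 0 := by
        intro k; rw [hAeven x k]; simp
      have ho : ∀ k, (inner ℂ ((y : ∀ _:ℕ, ℂ) (2*k+1)) ((A x : ∀ _:ℕ, ℂ) (2*k+1)) : ℂ)
          = inner ℂ ((B y : ∀ _:ℕ, ℂ) k) ((x : ∀ _:ℕ, ℂ) k) := by
        intro k; rw [hAodd x k, hB y k]
      have hSe : Summable
          (fun k => (inner ℂ ((y : ∀ _:ℕ, ℂ) (2*k)) ((A x : ∀ _:ℕ, ℂ) (2*k)) : ℂ)) := by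
        rw [funext he]; exact summable_zero
      have hSo : Summable (fun k =>
          (inner ℂ ((y : ∀ _:ℕ, ℂ) (2*k+1)) ((A x : ∀ _:ℕ, ℂ) (2*k+1)) : ℂ)) := by
        rw [funext ho]
        exact lp.summable_inner (𝕜 := ℂ) (B y) x
      have hT := tsum_even_add_odd
        (f := fun n => (inner ℂ ((y : ∀ _:ℕ, ℂ) n) ((A x : ∀ _:ℕ, ℂ) n) : ℂ)) hSe hSo
      rw [← hT, tsum_congr he, tsum_zero, tsum_congr ho, zero_add]
    -- kernel vectors of B - conj z are orthogonal to the range of A - z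
    have horth : ∀ y : ℓ2, B y = (starRingEnd ℂ) z • y → ∀ x : ℓ2,
        (inner ℂ y (opl A z x) : ℂ) = 0 := by
      intro y hy x
      rw [hopl, inner_sub_right, hadj, hy, inner_smul_left, inner_smul_right]
      rw [starRingEnd_self_apply]
      ring
    -- the cokernel of A - z is infinite dimensional
    have hzc : ‖(starRingEnd ℂ) z‖ < 1 := by simpa using hz
    have hsub : Submodule.span ℂ (Set.range (Gaux ((starRingEnd ℂ) z) hzc))
        ≤ LinearMap.ker (opl B ((starRingEnd ℂ) z) : ℓ2 →ₗ[ℂ] ℓ2) := by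
      rw [Submodule.span_le]
      rintro _ ⟨k, rfl⟩
      exact LinearMap.mem_ker.2 (hGeig _ hzc k)
    have hdisj : Disjoint (Submodule.span ℂ (Set.range (Gaux ((starRingEnd ℂ) z) hzc)))
        (LinearMap.range (opl A z : ℓ2 →ₗ[ℂ] ℓ2)) := by
      rw [Submodule.disjoint_def]
      intro w hw hwr
      obtain ⟨x, hx⟩ := hwr
      have hw1 : opl B ((starRingEnd ℂ) z) w = 0 := LinearMap.mem_ker.1 (hsub hw)
      rw [hopl] at hw1
      have hw2 : B w = (starRingEnd ℂ) z • w := sub_eq_zero.1 hw1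
      have h0 := horth w hw2 x
      rw [show opl A z x = w from hx] at h0
      exact inner_self_eq_zero.1 h0
    have hLI : LinearIndependent ℂ
        (⇑(LinearMap.range (opl A z : ℓ2 →ₗ[ℂ] ℓ2)).mkQ ∘ Gaux ((starRingEnd ℂ) z) hzc) := by
      apply (Gaux_li _ hzc).map
      rw [Submodule.ker_mkQ]
      exact hdisj
    have hdd : Cardinal.aleph0 ≤ dd (opl A z) := by
      rw [dd]
      have := hLI.cardinal_le_rank
      simpa [Cardinal.mk_nat] using this
    exact ⟨hUSF, hnnA, hdd, hnnB⟩
  refine ⟨main, fun z hz => ?_⟩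
  obtain ⟨h1, h2, h3, h4⟩ := main z hz
  exact ⟨h1, h3, by rw [h2, zero_add]; exact h4⟩


end UWE
end
end
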